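/- arXiv:math/9804004 — 2 statements merged into one kernel-verified Lean document; each statement's English description precedes it below -/
import Mathlib

section
/- Let ℐ be the family of independent sets of a symplectic matroid (E_{±n}, ℬ), and let I and J be members of ℐ such that |I| < |J| and such that for all y ∈ J∖I the set {y} ∪ I is not in ℐ. Define W = I ∖ (−J), Y = J ∖ (I ∪ (−I)), Z = I ∩ (−J), and X = E_{±n} ∖ (W ∪ (−W) ∪ Y ∪ (−Y) ∪ Z ∪ (−Z)). Then the set S = {x ∈ X : {x} ∪ W ∈ ℐ and {−x} ∪ W ∈ ℐ} ∪ {y ∈ Y : {y} ∪ W ∈ ℐ} is nonempty. -/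
/-- The ground set `E_{±n} = {±1, ±2, …, ±n}` as a finite set of integers. -/
noncomputable def SympE (n : ℕ) : Finset ℤ := (Finset.Icc (-(n : ℤ)) (n : ℤ)).erase 0

/-- `negSet S = {-s : s ∈ S}`. -/
def negSet (S : Finset ℤ) : Finset ℤ := S.image (fun x => -x)

/-- A set `S` is admissible if `S ∩ (-S) = ∅`. -/
def IsAdmissibleSet (S : Finset ℤ) : Prop := ∀ s ∈ S, -s ∉ S

/-- An admissible permutation of `E_{±n}`: a permutation of `ℤ` mapping `E_{±n}` to
itself and commuting with negation.  It induces the admissible total ordering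
`x ≺ y ↔ w x < w y` on `E_{±n}`. -/
def IsAdmissiblePerm (n : ℕ) (w : Equiv.Perm ℤ) : Prop :=
  (∀ x ∈ SympE n, w x ∈ SympE n) ∧ ∀ x : ℤ, w (-x) = -(w x)

/-- A weight function `ω` compatible with the admissible ordering induced by `w`:
`i ≺ j` implies `ω i ≤ ω j`. -/
def IsCompatibleWeight (n : ℕ) (w : Equiv.Perm ℤ) (ω : ℤ → ℝ) : Prop :=
  ∀ i ∈ SympE n, ∀ j ∈ SympE n, w i < w j → ω i ≤ ω j

/-- The elements of `E_{±n}` listed from largest to smallest with respect to the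
admissible ordering induced by `w`. -/
noncomputable def orderList (n : ℕ) (w : Equiv.Perm ℤ) : List ℤ :=
  (((SympE n).sort (· ≤ ·)).reverse).map w.symm

/-- The greedy algorithm: processing the elements of the list in order, starting
with the current set `B`, pick up an element iff adding it keeps the current set
a subset of some member of `ℬ`.  Returns the list of picked-up elements in order. -/
def greedyAux (ℬ : Finset (Finset ℤ)) : List ℤ → Finset ℤ → List ℤ
  | [], _ => []
  | a :: l, B =>
      if ∃ B' ∈ ℬ, insert a B ⊆ B' then a :: greedyAux ℬ l (insert a B)
      else greedyAux ℬ l B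

/-- The list of elements picked up by the greedy algorithm on `ℬ`, in decreasing
order with respect to the admissible ordering induced by `w`. -/
noncomputable def greedyPicks (n : ℕ) (ℬ : Finset (Finset ℤ)) (w : Equiv.Perm ℤ) : List ℤ :=
  greedyAux ℬ (orderList n w) ∅

/-- The greedy solution of `ℬ` with respect to the admissible ordering induced
by `w`. -/
noncomputable def greedySol (n : ℕ) (ℬ : Finset (Finset ℤ)) (w : Equiv.Perm ℤ) : Finset ℤ :=
  (greedyPicks n ℬ w).toFinset

/-- `(E_{±n}, ℬ)` is a symplectic matroid: `ℬ` is a nonempty family of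
equinumerous admissible subsets of `E_{±n}` such that for every admissible
ordering and every compatible weight function the greedy solution is optimal. -/
def IsSymplecticMatroid (n : ℕ) (ℬ : Finset (Finset ℤ)) : Prop :=
  ℬ.Nonempty ∧
  (∀ B ∈ ℬ, B ⊆ SympE n ∧ IsAdmissibleSet B) ∧
  (∀ B ∈ ℬ, ∀ B' ∈ ℬ, B.card = B'.card) ∧
  (∀ w : Equiv.Perm ℤ, IsAdmissiblePerm n w →
    ∀ ω : ℤ → ℝ, IsCompatibleWeight n w ω →
      ∀ B' ∈ ℬ, ∑ b ∈ B', ω b ≤ ∑ b ∈ greedySol n ℬ w, ω b)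

/-- The family of independent sets of `(E_{±n}, ℬ)`:
all subsets of `E_{±n}` contained in some member of `ℬ`. -/
noncomputable def indepSets (n : ℕ) (ℬ : Finset (Finset ℤ)) : Finset (Finset ℤ) :=
  (SympE n).powerset.filter (fun I => ∃ B ∈ ℬ, I ⊆ B)

/-- The collection of maximal (with respect to inclusion) members of `ℐ`. -/
def maximalMembers (ℐ : Finset (Finset ℤ)) : Finset (Finset ℤ) :=
  ℐ.filter (fun B => ∀ I ∈ ℐ, B ⊆ I → I = B)

/-- The independent-set exchange property for symplectic matroids. -/
def ExchangeProp (ℐ : Finset (Finset ℤ)) : Prop :=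
  ∀ I ∈ ℐ, ∀ J ∈ ℐ, I.card < J.card →
    (∀ y ∈ J \ I, insert y I ∉ ℐ) →
      ¬ IsAdmissibleSet (I ∪ J) ∧
        ∃ x, x ∉ I ∧ insert x I ∈ ℐ ∧ insert (-x) (I \ negSet J) ∈ ℐ

lemma mem_negSet {S : Finset ℤ} {x : ℤ} : x ∈ negSet S ↔ -x ∈ S := by
  simp only [negSet, Finset.mem_image]
  constructor
  · rintro ⟨a, ha, rfl⟩; simpa
  · intro h; exact ⟨-x, h, by ring⟩

lemma mem_sympE {n : ℕ} {x : ℤ} : x ∈ SympE n ↔ x ≠ 0 ∧ -(n:ℤ) ≤ x ∧ x ≤ n := by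
  simp [SympE, Finset.mem_erase, Finset.mem_Icc, and_assoc]

lemma neg_mem_sympE {n : ℕ} {x : ℤ} (h : x ∈ SympE n) : -x ∈ SympE n := by
  rw [mem_sympE] at h ⊢; omega

lemma card_negSet (S : Finset ℤ) : (negSet S).card = S.card :=
  Finset.card_image_of_injective _ neg_injective

lemma greedyAux_append (ℬ : Finset (Finset ℤ)) (l1 l2 : List ℤ) (B : Finset ℤ) :
    greedyAux ℬ (l1 ++ l2) B
      = greedyAux ℬ l1 B ++ greedyAux ℬ l2 (B ∪ (greedyAux ℬ l1 B).toFinset) := by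
  induction l1 generalizing B with
  | nil => simp [greedyAux]
  | cons a t ih =>
    by_cases h : ∃ B' ∈ ℬ, insert a B ⊆ B'
    · have he : ∀ T : Finset ℤ, insert a B ∪ T = B ∪ insert a T := by
        intro T; ext x; simp [Finset.mem_insert, Finset.mem_union]
      simp only [List.cons_append, greedyAux, if_pos h, List.append_eq, ih, List.toFinset_cons, he]
    · simpa only [List.cons_append, greedyAux, if_neg h, List.append_eq] using ih B

lemma greedyAux_all (ℬ : Finset (Finset ℤ)) (l : List ℤ) (B B' : Finset ℤ)
    (h1 : B' ∈ ℬ) (h2 : B ∪ l.toFinset ⊆ B') : greedyAux ℬ l B = l := by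
  induction l generalizing B with
  | nil => simp [greedyAux]
  | cons a t ih =>
    have hcond : ∃ B'' ∈ ℬ, insert a B ⊆ B'' := by
      refine ⟨B', h1, ?_⟩
      intro x hx
      rcases Finset.mem_insert.mp hx with rfl | hx
      · exact h2 (by simp)
      · exact h2 (by simp [hx])
    simp only [greedyAux, if_pos hcond]
    rw [ih]
    intro x hx
    rcases Finset.mem_union.mp hx with hx | hx
    · rcases Finset.mem_insert.mp hx with rfl | hx
      · exact h2 (by simp)
      · exact h2 (by simp [hx])
    · exact h2 (by simp [List.mem_toFinset.mp hx])

lemma greedyAux_skip (ℬ : Finset (Finset ℤ)) (l : List ℤ) (B W : Finset ℤ)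
    (hWB : W ⊆ B) (h : ∀ a ∈ l, ∀ B' ∈ ℬ, ¬ insert a W ⊆ B') :
    greedyAux ℬ l B = [] := by
  induction l with
  | nil => simp [greedyAux]
  | cons a t ih =>
    have hcond : ¬ ∃ B' ∈ ℬ, insert a B ⊆ B' := by
      rintro ⟨B', hB', hsub⟩
      exact h a (by simp) B' hB' ((Finset.insert_subset_insert a hWB).trans hsub)
    simp only [greedyAux, if_neg hcond]
    exact ih fun a ha => h a (by simp [ha])

lemma greedyAux_mem (ℬ : Finset (Finset ℤ)) (l : List ℤ) (B : Finset ℤ) :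
    ∀ x ∈ greedyAux ℬ l B, x ∈ l := by
  induction l generalizing B with
  | nil => simp [greedyAux]
  | cons a t ih =>
    intro x hx
    by_cases h : ∃ B' ∈ ℬ, insert a B ⊆ B'
    · simp only [greedyAux, if_pos h, List.mem_cons] at hx
      rcases hx with hx | hx
      · simp [hx]
      · simp [ih _ x hx]
    · simp only [greedyAux, if_neg h] at hx
      simp [ih _ x hx]

def mkSigma (n : ℕ) (H : List ℤ) : ℤ → ℤ := fun y =>
  if 1 ≤ y ∧ y ≤ (n:ℤ) then H.getD (n - y.toNat) 0
  else if 1 ≤ -y ∧ -y ≤ (n:ℤ) then -(H.getD (n - (-y).toNat) 0)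
  else y

def mkTau (n : ℕ) (H : List ℤ) : ℤ → ℤ := fun x =>
  if x ∈ H then (n : ℤ) - H.idxOf x
  else if -x ∈ H then -((n:ℤ) - H.idxOf (-x)) else x

section perm
variable {n : ℕ} {H : List ℤ}
  (hlen : H.length = n) (hnd : H.Nodup)
  (hadm : ∀ x ∈ H, -x ∉ H)
  (hmem : ∀ x ∈ H, x ∈ SympE n)
  (hcover : ∀ x ∈ SympE n, x ∈ H ∨ -x ∈ H)

include hlen hnd hadm hmem in
lemma mkTau_mkSigma : ∀ y, mkTau n H (mkSigma n H y) = y := by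
  intro y
  have habs : ∀ x ∈ H, x ≠ 0 ∧ -(n:ℤ) ≤ x ∧ x ≤ (n:ℤ) := fun x hx => mem_sympE.mp (hmem x hx)
  by_cases h1 : 1 ≤ y ∧ y ≤ (n:ℤ)
  · have hidx : n - y.toNat < H.length := by omega
    have ha : H.getD (n - y.toNat) 0 = H[n - y.toNat] := List.getD_eq_getElem H 0 hidx
    have haH : H.getD (n - y.toNat) 0 ∈ H := by rw [ha]; exact List.getElem_mem hidx
    have hio : H.idxOf (H.getD (n - y.toNat) 0) = n - y.toNat := by
      have h2 : H.idxOf (H.getD (n - y.toNat) 0) < H.length :=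
        List.idxOf_lt_length_iff.mpr haH
      have h3 : H[H.idxOf (H.getD (n - y.toNat) 0)] = H[n - y.toNat] :=
        (List.getElem_idxOf h2).trans ha
      exact (List.Nodup.getElem_inj_iff hnd).mp h3
    simp only [mkSigma, if_pos h1, mkTau, if_pos haH, hio]
    have : y.toNat ≤ n := by omega
    push_cast [Nat.cast_sub this]
    omega
  · by_cases h2 : 1 ≤ -y ∧ -y ≤ (n:ℤ)
    · have hidx : n - (-y).toNat < H.length := by omega
      have ha : H.getD (n - (-y).toNat) 0 = H[n - (-y).toNat] := List.getD_eq_getElem H 0 hidx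
      have haH : H.getD (n - (-y).toNat) 0 ∈ H := by rw [ha]; exact List.getElem_mem hidx
      have hnot : -(H.getD (n - (-y).toNat) 0) ∉ H := hadm _ haH
      have hio : H.idxOf (H.getD (n - (-y).toNat) 0) = n - (-y).toNat := by
        have h2' : H.idxOf (H.getD (n - (-y).toNat) 0) < H.length :=
          List.idxOf_lt_length_iff.mpr haH
        have h3 : H[H.idxOf (H.getD (n - (-y).toNat) 0)] = H[n - (-y).toNat] :=
          (List.getElem_idxOf h2').trans ha
        exact (List.Nodup.getElem_inj_iff hnd).mp h3
      simp only [mkSigma, if_pos h2, if_neg h1, mkTau, if_neg hnot, neg_neg, if_pos haH, hio]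
      have : (-y).toNat ≤ n := by omega
      push_cast [Nat.cast_sub this]
      omega
    · have hy0 : y ∉ H := by
        intro h; have := habs y h; omega
      have hy1 : -y ∉ H := by
        intro h; have := habs _ h; omega
      simp only [mkSigma, if_neg h1, if_neg h2, mkTau, if_neg hy0, if_neg hy1]

include hlen hnd hcover in
lemma mkSigma_mkTau : ∀ x, mkSigma n H (mkTau n H x) = x := by
  intro x
  by_cases h1 : x ∈ H
  · have hidx : H.idxOf x < n := hlen ▸ List.idxOf_lt_length_iff.mpr h1
    have hb : 1 ≤ (n:ℤ) - H.idxOf x ∧ (n:ℤ) - H.idxOf x ≤ (n:ℤ) := by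
      constructor <;> [omega; omega]
    have ht : ((n:ℤ) - H.idxOf x).toNat = n - H.idxOf x := by omega
    have hi2 : n - (n - H.idxOf x) = H.idxOf x := by omega
    have hidx' : H.idxOf x < H.length := by omega
    simp only [mkTau, if_pos h1, mkSigma, if_pos hb, ht, hi2]
    exact List.getD_eq_getElem H 0 hidx' ▸ List.getElem_idxOf hidx'
  · by_cases h2 : -x ∈ H
    · have hidx : H.idxOf (-x) < n := hlen ▸ List.idxOf_lt_length_iff.mpr h2
      have hb1 : ¬ (1 ≤ -((n:ℤ) - H.idxOf (-x)) ∧ -((n:ℤ) - H.idxOf (-x)) ≤ (n:ℤ)) := by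
        omega
      have hb2 : 1 ≤ -(-((n:ℤ) - H.idxOf (-x))) ∧ -(-((n:ℤ) - H.idxOf (-x))) ≤ (n:ℤ) := by
        constructor <;> omega
      have ht : (-(-((n:ℤ) - H.idxOf (-x)))).toNat = n - H.idxOf (-x) := by omega
      have hi2 : n - (n - H.idxOf (-x)) = H.idxOf (-x) := by omega
      have hidx' : H.idxOf (-x) < H.length := by omega
      simp only [mkTau, if_neg h1, if_pos h2, mkSigma, if_neg hb1, if_pos hb2, ht, hi2]
      rw [List.getD_eq_getElem H 0 hidx', List.getElem_idxOf hidx', neg_neg]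
    · have hs : x ∉ SympE n := fun hx => by rcases hcover x hx with h | h <;> tauto
      have hb1 : ¬ (1 ≤ x ∧ x ≤ (n:ℤ)) := by
        intro h; exact hs (mem_sympE.mpr ⟨by omega, by omega, by omega⟩)
      have hb2 : ¬ (1 ≤ -x ∧ -x ≤ (n:ℤ)) := by
        intro h; exact hs (mem_sympE.mpr ⟨by omega, by omega, by omega⟩)
      simp only [mkTau, if_neg h1, if_neg h2, mkSigma, if_neg hb1, if_neg hb2]
end perm

section perm2
variable {n : ℕ} {H : List ℤ}

lemma mkTau_neg (hadm : ∀ x ∈ H, -x ∉ H) : ∀ x, mkTau n H (-x) = -(mkTau n H x) := by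
  intro x
  by_cases h1 : x ∈ H
  · have h2 : -x ∉ H := hadm x h1
    simp only [mkTau, if_pos h1, if_neg h2, neg_neg, if_pos h1]
  · by_cases h2 : -x ∈ H
    · simp only [mkTau, if_neg h1, if_pos h2, neg_neg]
    · simp only [mkTau, if_neg h1, if_neg h2, neg_neg]

lemma mkTau_maps (hlen : H.length = n)
    (hcover : ∀ x ∈ SympE n, x ∈ H ∨ -x ∈ H) :
    ∀ x ∈ SympE n, mkTau n H x ∈ SympE n := by
  intro x hx
  rcases hcover x hx with h | h
  · have hidx : H.idxOf x < n := hlen ▸ List.idxOf_lt_length_iff.mpr h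
    simp only [mkTau, if_pos h]
    rw [mem_sympE]
    refine ⟨by omega, by omega, by omega⟩
  · by_cases h1 : x ∈ H
    · have hidx : H.idxOf x < n := hlen ▸ List.idxOf_lt_length_iff.mpr h1
      simp only [mkTau, if_pos h1]
      rw [mem_sympE]
      refine ⟨by omega, by omega, by omega⟩
    · have hidx : H.idxOf (-x) < n := hlen ▸ List.idxOf_lt_length_iff.mpr h
      simp only [mkTau, if_neg h1, if_pos h]
      rw [mem_sympE]
      refine ⟨by omega, by omega, by omega⟩

end perm2

def descCand (n : ℕ) : List ℤ :=
  (List.range n).map (fun k : ℕ => (n:ℤ) - k) ++ (List.range n).map (fun k : ℕ => -(k:ℤ) - 1)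

lemma descCand_pairwise (n : ℕ) : (descCand n).Pairwise (· > ·) := by
  rw [descCand, List.pairwise_append]
  refine ⟨?_, ?_, ?_⟩
  · rw [List.pairwise_map]
    exact (List.pairwise_lt_range (n := n)).imp (fun {a b} hab => by push_cast; omega)
  · rw [List.pairwise_map]
    exact (List.pairwise_lt_range (n := n)).imp (fun {a b} hab => by push_cast; omega)
  · rintro a ha b hb
    simp only [List.mem_map, List.mem_range] at ha hb
    obtain ⟨k, hk, rfl⟩ := ha
    obtain ⟨j, hj, rfl⟩ := hb
    push_cast
    omega

lemma mem_descCand {n : ℕ} {x : ℤ} : x ∈ descCand n ↔ x ∈ SympE n := by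
  simp only [descCand, List.mem_append, List.mem_map, List.mem_range, mem_sympE]
  constructor
  · rintro (⟨k, hk, rfl⟩ | ⟨k, hk, rfl⟩) <;> exact ⟨by omega, by omega, by omega⟩
  · rintro ⟨h0, h1, h2⟩
    by_cases hx : 0 < x
    · left; exact ⟨(n - x).toNat, by omega, by omega⟩
    · right; exact ⟨(-x - 1).toNat, by omega, by omega⟩

lemma sort_sympE (n : ℕ) : (SympE n).sort (· ≤ ·) = (descCand n).reverse := by
  have hnd : (descCand n).Nodup :=
    (descCand_pairwise n).imp (fun h => by omega)
  refine (fun hp h1 h2 => List.Perm.eq_of_pairwise' (r := (· ≤ ·)) h1 h2 hp) ?_ ?_ ?_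
  · apply List.perm_of_nodup_nodup_toFinset_eq (Finset.sort_nodup _ _) (List.nodup_reverse.mpr hnd)
    rw [Finset.sort_toFinset]
    ext x
    simp [List.mem_toFinset, List.mem_reverse, mem_descCand]
  · exact Finset.pairwise_sort _ _
  · rw [List.pairwise_reverse]
    exact (descCand_pairwise n).imp (fun h => le_of_lt h)

lemma map_getD_range (l : List ℤ) :
    (List.range l.length).map (fun k => l.getD k 0) = l := by
  apply List.ext_getElem
  · simp
  · intro i h1 h2
    simp only [List.getElem_map, List.getElem_range]
    exact List.getD_eq_getElem l 0 h2

lemma map_mkSigma {n : ℕ} {H : List ℤ} (hlen : H.length = n) :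
    (descCand n).map (mkSigma n H)
      = H ++ (List.range n).map (fun k : ℕ => -(H.getD (n - (k+1)) 0)) := by
  simp only [descCand, List.map_append, List.map_map]
  congr 1
  · have heq : ∀ k ∈ List.range n, (mkSigma n H ∘ fun k : ℕ => (n:ℤ) - k) k
        = (fun k : ℕ => H.getD k 0) k := by
      intro k hk
      rw [List.mem_range] at hk
      have hb : 1 ≤ (n:ℤ) - k ∧ (n:ℤ) - k ≤ (n:ℤ) := by constructor <;> push_cast <;> omega
      have ht : ((n:ℤ) - k).toNat = n - k := by omega
      have h2 : n - (n - k) = k := by omega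
      simp only [Function.comp, mkSigma, if_pos hb, ht, h2]
    rw [List.map_congr_left heq, ← hlen, map_getD_range]
  · apply List.map_congr_left
    intro k hk
    rw [List.mem_range] at hk
    have hb1 : ¬ (1 ≤ -(k:ℤ) - 1 ∧ -(k:ℤ) - 1 ≤ (n:ℤ)) := by push_cast; omega
    have hb2 : 1 ≤ -(-(k:ℤ) - 1) ∧ -(-(k:ℤ) - 1) ≤ (n:ℤ) := by constructor <;> push_cast <;> omega
    have ht : (-(-(k:ℤ) - 1)).toNat = k + 1 := by omega
    simp only [Function.comp, mkSigma, if_neg hb1, if_pos hb2, ht]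

lemma card_sympE (n : ℕ) : (SympE n).card = 2 * n := by
  rw [SympE, Finset.card_erase_of_mem (by simp [Finset.mem_Icc]), Int.card_Icc]
  omega

/-- Let `ℐ` be the family of independent sets of a symplectic matroid
`(E_{±n}, ℬ)`, and let `I, J ∈ ℐ` with `|I| < |J|` and `{y} ∪ I ∉ ℐ` for all
`y ∈ J \ I`.  With `W = I \ (-J)`, `Y = J \ (I ∪ (-I))`, `Z = I ∩ (-J)` and
`X = E_{±n} \ (W ∪ (-W) ∪ Y ∪ (-Y) ∪ Z ∪ (-Z))`, the set
`S = {x ∈ X : {x} ∪ W ∈ ℐ and {-x} ∪ W ∈ ℐ} ∪ {y ∈ Y : {y} ∪ W ∈ ℐ}`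
is nonempty. -/
theorem exchange_witness_set_nonempty (n : ℕ) (hn : 0 < n)
    (ℬ : Finset (Finset ℤ)) (hB : IsSymplecticMatroid n ℬ)
    (I J : Finset ℤ)
    (hI : I ∈ indepSets n ℬ) (hJ : J ∈ indepSets n ℬ)
    (hcard : I.card < J.card)
    (hy : ∀ y ∈ J \ I, insert y I ∉ indepSets n ℬ)
    (W Y Z X S : Finset ℤ)
    (hW : W = I \ negSet J)
    (hY : Y = J \ (I ∪ negSet I))
    (hZ : Z = I ∩ negSet J)
    (hX : X = SympE n \ (W ∪ negSet W ∪ Y ∪ negSet Y ∪ Z ∪ negSet Z))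
    (hS : S = X.filter
          (fun x => insert x W ∈ indepSets n ℬ ∧ insert (-x) W ∈ indepSets n ℬ)
        ∪ Y.filter (fun y => insert y W ∈ indepSets n ℬ)) :
    S.Nonempty := by
  by_contra hne
  rw [Finset.not_nonempty_iff_eq_empty] at hne
  obtain ⟨hBne, hBadm, hBcard, hgreedy⟩ := hB
  simp only [indepSets, Finset.mem_filter, Finset.mem_powerset] at hI hJ
  obtain ⟨hIs, BI, hBI, hIBI⟩ := hI
  obtain ⟨hJs, BJ, hBJ, hJBJ⟩ := hJ
  have hIadm : IsAdmissibleSet I := fun s hs hns => (hBadm BI hBI).2 s (hIBI hs) (hIBI hns)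
  have hJadm : IsAdmissibleSet J := fun s hs hns => (hBadm BJ hBJ).2 s (hJBJ hs) (hJBJ hns)
  have hWI : W ⊆ I := hW ▸ Finset.sdiff_subset
  have hZI : Z ⊆ I := hZ ▸ Finset.inter_subset_left
  have hYJ : Y ⊆ J := hY ▸ Finset.sdiff_subset
  have hWS : W ⊆ SympE n := hWI.trans hIs
  -- Y insertions all fail
  have hYfail : ∀ y ∈ Y, ∀ B' ∈ ℬ, ¬ insert y W ⊆ B' := by
    intro y hyY B' hB' hsub
    have hmem : insert y W ∈ indepSets n ℬ := by
      rw [indepSets, Finset.mem_filter, Finset.mem_powerset]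
      exact ⟨Finset.insert_subset (hJs (hYJ hyY)) hWS, B', hB', hsub⟩
    have : y ∈ S := by
      rw [hS, Finset.mem_union]
      exact Or.inr (Finset.mem_filter.mpr ⟨hyY, hmem⟩)
    rw [hne] at this
    exact absurd this (Finset.notMem_empty y)
  -- the set U
  set U : Finset ℤ := W ∪ negSet Z ∪ Y with hU
  have hnZJ : negSet Z ⊆ J := by
    intro x hx
    rw [mem_negSet, hZ, Finset.mem_inter, mem_negSet, neg_neg] at hx
    exact hx.2
  have hUS : U ⊆ SympE n := by
    intro x hx
    rw [hU, Finset.mem_union, Finset.mem_union] at hx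
    rcases hx with (hx | hx) | hx
    · exact hWS hx
    · exact hJs (hnZJ hx)
    · exact hJs (hYJ hx)
  have hJU : J ⊆ U := by
    intro j hj
    rw [hU, Finset.mem_union, Finset.mem_union]
    by_cases hjI : j ∈ I
    · left; left
      rw [hW, Finset.mem_sdiff, mem_negSet]
      exact ⟨hjI, fun h => hJadm j hj h⟩
    · by_cases hjnI : j ∈ negSet I
      · left; right
        rw [mem_negSet, hZ, Finset.mem_inter, mem_negSet, neg_neg]
        exact ⟨mem_negSet.mp hjnI, hj⟩
      · right
        rw [hY, Finset.mem_sdiff, Finset.mem_union]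
        exact ⟨hj, fun h => by tauto⟩
  have hWmem : ∀ a, a ∈ W → a ∈ I ∧ a ∉ negSet J := fun a ha => by
    rw [hW, Finset.mem_sdiff] at ha; exact ha
  have hZmem : ∀ a, a ∈ negSet Z → -a ∈ I ∧ a ∈ J := fun a ha => by
    rw [mem_negSet, hZ, Finset.mem_inter, mem_negSet, neg_neg] at ha; exact ha
  have hYmem : ∀ a, a ∈ Y → a ∈ J ∧ a ∉ I ∧ -a ∉ I := fun a ha => by
    rw [hY, Finset.mem_sdiff, Finset.mem_union, mem_negSet] at ha; tauto
  have hUadm : IsAdmissibleSet U := by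
    intro u hu hnu
    rw [hU, Finset.mem_union, Finset.mem_union] at hu hnu
    rcases hu with (hu | hu) | hu <;> rcases hnu with (hnu | hnu) | hnu
    · exact hIadm u (hWmem u hu).1 (hWmem (-u) hnu).1
    · exact (hWmem u hu).2 (by rw [mem_negSet]; exact (hZmem (-u) hnu).2)
    · exact (hYmem (-u) hnu).2.2 (by rw [neg_neg]; exact (hWmem u hu).1)
    · exact (hWmem (-u) hnu).2 (by rw [mem_negSet, neg_neg]; exact (hZmem u hu).2)
    · exact hIadm (-u) (hZmem u hu).1 (by rw [neg_neg]; exact (by simpa using (hZmem (-u) hnu).1))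
    · exact (hYmem (-u) hnu).2.1 (by simpa using (hZmem u hu).1)
    · exact (hYmem u hu).2.2 (hWmem (-u) hnu).1
    · exact (hYmem u hu).2.1 (by simpa using (hZmem (-u) hnu).1)
    · exact hJadm u (hYmem u hu).1 (hYmem (-u) hnu).1
  -- cardinality facts
  have hWnZ : Disjoint W (negSet Z) := by
    rw [Finset.disjoint_left]
    intro a haW hanZ
    exact hIadm a (hWI haW) (hZI (mem_negSet.mp hanZ))
  have hWY : Disjoint W Y := by
    rw [Finset.disjoint_left]
    intro a haW haY
    exact (hYmem a haY).2.1 (hWI haW)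
  have hnZY : Disjoint (negSet Z) Y := by
    rw [Finset.disjoint_left]
    intro a ha haY
    exact (hYmem a haY).2.2 (hZmem a ha).1
  have hUcard : U.card = W.card + Z.card + Y.card := by
    rw [hU, Finset.card_union_of_disjoint (Finset.disjoint_union_left.mpr ⟨hWY, hnZY⟩),
      Finset.card_union_of_disjoint hWnZ, card_negSet]
  have hIcard : I.card = W.card + Z.card := by
    have h := Finset.card_sdiff_add_card_inter I (negSet J)
    rw [← hW, ← hZ] at h
    omega
  have hUdisj : Disjoint U (negSet U) := by
    rw [Finset.disjoint_left]
    intro a ha hna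
    exact hUadm a ha (mem_negSet.mp hna)
  have hUUS : U ∪ negSet U ⊆ SympE n := by
    intro x hx
    rcases Finset.mem_union.mp hx with hx | hx
    · exact hUS hx
    · simpa using neg_mem_sympE (hUS (mem_negSet.mp hx))
  have hUn : U.card ≤ n := by
    have h1 : (U ∪ negSet U).card = U.card + U.card := by
      rw [Finset.card_union_of_disjoint hUdisj, card_negSet]
    have h2 : (U ∪ negSet U).card ≤ (SympE n).card := Finset.card_le_card hUUS
    rw [card_sympE] at h2
    omega
  -- the complement R and its positive half
  set R : Finset ℤ := SympE n \ (U ∪ negSet U) with hR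
  have hRsym : ∀ x ∈ R, -x ∈ R := by
    intro x hx
    rw [hR, Finset.mem_sdiff] at hx ⊢
    refine ⟨neg_mem_sympE hx.1, fun h => hx.2 ?_⟩
    rcases Finset.mem_union.mp h with h | h
    · exact Finset.mem_union_right _ (mem_negSet.mpr h)
    · exact Finset.mem_union_left _ (by simpa using mem_negSet.mp h)
  set Rpos : Finset ℤ := R.filter (fun x => 0 < x) with hRpos
  have hRposR : Rpos ⊆ R := Finset.filter_subset _ _
  have hRneg : R.filter (fun x => ¬ 0 < x) = negSet Rpos := by
    ext x
    rw [Finset.mem_filter, mem_negSet, hRpos, Finset.mem_filter]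
    constructor
    · rintro ⟨hxR, hx0⟩
      have hx0' : x ≠ 0 := (mem_sympE.mp ((Finset.sdiff_subset) (hR ▸ hxR))).1
      exact ⟨hRsym x hxR, by omega⟩
    · rintro ⟨hxR, hx0⟩
      have := hRsym _ hxR
      rw [neg_neg] at this
      exact ⟨this, by omega⟩
  have hRcard : R.card = Rpos.card + Rpos.card := by
    have h1 := Finset.card_filter_add_card_filter_not (s := R) (p := fun x => 0 < x)
    rw [hRneg, card_negSet, ← hRpos] at h1
    omega
  have hRcard2 : R.card + (U.card + U.card) = 2 * n := by
    have h1 : (U ∪ negSet U).card = U.card + U.card := by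
      rw [Finset.card_union_of_disjoint hUdisj, card_negSet]
    have h2 := Finset.card_sdiff_add_card_eq_card hUUS
    rw [← hR, h1, card_sympE] at h2
    omega
  -- the list H
  set LW : List ℤ := W.sort (· ≤ ·) with hLW
  set LZ : List ℤ := (negSet Z).sort (· ≤ ·) with hLZ
  set LY : List ℤ := Y.sort (· ≤ ·) with hLY
  set LR : List ℤ := Rpos.sort (· ≤ ·) with hLR
  set LU : List ℤ := LW ++ LZ ++ LY with hLU
  set H : List ℤ := LU ++ LR with hH
  have hLUmem : ∀ x, x ∈ LU ↔ x ∈ U := by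
    intro x
    simp [hLU, hU, hLW, hLZ, hLY, List.mem_append, Finset.mem_sort, Finset.mem_union,
      or_assoc]
  have hHmemiff : ∀ x, x ∈ H ↔ x ∈ U ∨ x ∈ Rpos := by
    intro x
    rw [hH, List.mem_append, hLUmem, hLR, Finset.mem_sort]
  have hHlen : H.length = n := by
    have hval : U.card + Rpos.card = n := by omega
    rw [hH, hLU, List.length_append, List.length_append, List.length_append,
      hLW, hLZ, hLY, hLR, Finset.length_sort, Finset.length_sort, Finset.length_sort,
      Finset.length_sort, card_negSet]
    omega
  have hdisjLem : ∀ (A B : Finset ℤ), Disjoint A B →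
      (A.sort (· ≤ ·)).Disjoint (B.sort (· ≤ ·)) := by
    intro A B hAB a haA haB
    rw [Finset.mem_sort] at haA haB
    exact Finset.disjoint_left.mp hAB haA haB
  have hRU : Disjoint U Rpos := by
    rw [Finset.disjoint_right]
    intro a ha
    have h2 := hRposR ha
    rw [hR, Finset.mem_sdiff, Finset.mem_union] at h2
    exact fun h => h2.2 (Or.inl h)
  have hHnd : H.Nodup := by
    have hndWZ : (LW ++ LZ).Nodup :=
      (Finset.sort_nodup _ _).append (Finset.sort_nodup _ _) (hdisjLem _ _ hWnZ)
    have hndLU : LU.Nodup := by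
      rw [hLU]
      refine hndWZ.append (Finset.sort_nodup _ _) ?_
      intro a ha hb
      rw [List.mem_append] at ha
      rw [hLY, Finset.mem_sort] at hb
      rcases ha with ha | ha
      · exact Finset.disjoint_left.mp hWY (by rwa [hLW, Finset.mem_sort] at ha) hb
      · exact Finset.disjoint_left.mp hnZY (by rwa [hLZ, Finset.mem_sort] at ha) hb
    rw [hH]
    refine hndLU.append (Finset.sort_nodup _ _) ?_
    intro a ha hb
    rw [hLR, Finset.mem_sort] at hb
    exact Finset.disjoint_left.mp hRU ((hLUmem a).mp ha) hb
  have hHadm : ∀ x ∈ H, -x ∉ H := by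
    intro x hx hnx
    rw [hHmemiff] at hx hnx
    have hRnU : ∀ a ∈ Rpos, a ∉ U ∧ a ∉ negSet U := by
      intro a ha
      have := hRposR ha
      rw [hR, Finset.mem_sdiff, Finset.mem_union] at this
      exact ⟨fun h => this.2 (Or.inl h), fun h => this.2 (Or.inr h)⟩
    rcases hx with hx | hx <;> rcases hnx with hnx | hnx
    · exact hUadm x hx hnx
    · exact (hRnU _ hnx).2 (mem_negSet.mpr (by simpa using hx))
    · exact (hRnU _ hx).2 (mem_negSet.mpr hnx)
    · have h1 : (0:ℤ) < x := (Finset.mem_filter.mp hx).2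
      have h2 : (0:ℤ) < -x := (Finset.mem_filter.mp hnx).2
      omega
  have hHscope : ∀ x ∈ H, x ∈ SympE n := by
    intro x hx
    rw [hHmemiff] at hx
    rcases hx with hx | hx
    · exact hUS hx
    · exact (Finset.mem_sdiff.mp (hR ▸ hRposR hx)).1
  have hHcover : ∀ x ∈ SympE n, x ∈ H ∨ -x ∈ H := by
    intro x hx
    by_cases h1 : x ∈ U ∪ negSet U
    · rcases Finset.mem_union.mp h1 with h | h
      · exact Or.inl ((hHmemiff x).mpr (Or.inl h))
      · exact Or.inr ((hHmemiff (-x)).mpr (Or.inl (mem_negSet.mp h)))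
    · have hxR : x ∈ R := by rw [hR, Finset.mem_sdiff]; exact ⟨hx, h1⟩
      have hx0 : x ≠ 0 := (mem_sympE.mp hx).1
      by_cases h2 : 0 < x
      · exact Or.inl ((hHmemiff x).mpr (Or.inr (Finset.mem_filter.mpr ⟨hxR, h2⟩)))
      · refine Or.inr ((hHmemiff (-x)).mpr (Or.inr (Finset.mem_filter.mpr
          ⟨hRsym x hxR, by omega⟩)))
  -- the admissible permutation and weight function
  set w : Equiv.Perm ℤ := ⟨mkTau n H, mkSigma n H,
    mkSigma_mkTau hHlen hHnd hHcover, mkTau_mkSigma hHlen hHnd hHadm hHscope⟩ with hw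
  have hwadm : IsAdmissiblePerm n w := by
    constructor
    · intro x hx; exact mkTau_maps hHlen hHcover x hx
    · intro x; exact mkTau_neg hHadm x
  set ω : ℤ → ℝ := fun x => if x ∈ U then (1:ℝ) else 0 with hω
  have hLUlen : LU.length = U.card := by
    rw [hLU, List.length_append, List.length_append, hLW, hLZ, hLY,
      Finset.length_sort, Finset.length_sort, Finset.length_sort, card_negSet]
    omega
  have hcompat : IsCompatibleWeight n w ω := by
    intro i hi j hj hlt
    by_cases hiU : i ∈ U
    · have hjU : j ∈ U := by
        by_contra hjU
        have hiLU : i ∈ LU := (hLUmem i).mpr hiU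
        have hiH : i ∈ H := by rw [hH, List.mem_append]; exact Or.inl hiLU
        have hidxi : H.idxOf i < U.card := by
          rw [hH, List.idxOf_append_of_mem hiLU, ← hLUlen]
          exact List.idxOf_lt_length_iff.mpr hiLU
        have hti : w i = (n:ℤ) - H.idxOf i := by
          show mkTau n H i = _
          rw [mkTau, if_pos hiH]
        rcases hHcover j hj with hjH | hjH
        · have hjLR : j ∈ LR := by
            rcases (hHmemiff j).mp hjH with h | h
            · exact absurd h hjU
            · rwa [hLR, Finset.mem_sort]
          have hjnLU : j ∉ LU := fun h => hjU ((hLUmem j).mp h)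
          have hidxj : U.card ≤ H.idxOf j := by
            rw [hH, List.idxOf_append_of_notMem hjnLU, hLUlen]
            omega
          have htj : w j = (n:ℤ) - H.idxOf j := by
            show mkTau n H j = _
            rw [mkTau, if_pos hjH]
          rw [hti, htj] at hlt
          omega
        · have hjnH : j ∉ H := fun h => hHadm j h hjH
          have htj : w j = -((n:ℤ) - H.idxOf (-j)) := by
            show mkTau n H j = _
            rw [mkTau, if_neg hjnH, if_pos hjH]
          have hidxj : H.idxOf (-j) < n := hHlen ▸ List.idxOf_lt_length_iff.mpr hjH
          rw [hti, htj] at hlt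
          omega
      simp only [hω, if_pos hiU, if_pos hjU, le_refl]
    · simp only [hω, if_neg hiU]
      split_ifs <;> norm_num
  have hsum : ∀ A : Finset ℤ, ∑ b ∈ A, ω b = ((A ∩ U).card : ℝ) := by
    intro A
    simp only [hω]
    rw [Finset.sum_boole, Finset.filter_mem_eq_inter]
  -- structure of the order list
  have horder : orderList n w
      = H ++ (List.range n).map (fun k : ℕ => -(H.getD (n - (k+1)) 0)) := by
    rw [orderList, sort_sympE, List.reverse_reverse]
    have hcoe : ⇑w.symm = mkSigma n H := rfl
    rw [hcoe, map_mkSigma hHlen]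
  set T : List ℤ := (List.range n).map (fun k : ℕ => -(H.getD (n - (k+1)) 0)) with hT
  have hTmem : ∀ x ∈ T, -x ∈ H := by
    intro x hx
    rw [hT, List.mem_map] at hx
    obtain ⟨k, hk, rfl⟩ := hx
    rw [List.mem_range] at hk
    have hik : n - (k+1) < H.length := by omega
    rw [neg_neg, List.getD_eq_getElem H 0 hik]
    exact List.getElem_mem hik
  -- run the greedy algorithm phase by phase
  have hLWfin : LW.toFinset = W := by rw [hLW]; exact Finset.sort_toFinset _ _
  have hstep1 : greedyAux ℬ LW (∅ : Finset ℤ) = LW := by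
    refine greedyAux_all ℬ LW ∅ BI hBI ?_
    rw [Finset.empty_union, hLWfin]
    exact hWI.trans hIBI
  have hWB2 : W ⊆ (∅ ∪ LW.toFinset) ∪ (greedyAux ℬ LZ (∅ ∪ LW.toFinset)).toFinset := by
    intro x hx
    exact Finset.mem_union_left _ (Finset.mem_union_right _ (by rwa [hLWfin]))
  have hstep3 : greedyAux ℬ LY
      ((∅ ∪ LW.toFinset) ∪ (greedyAux ℬ LZ (∅ ∪ LW.toFinset)).toFinset) = [] :=
    greedyAux_skip ℬ LY _ W hWB2
      (fun a ha => hYfail a (by rwa [hLY, Finset.mem_sort] at ha))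
  have hpicks : greedyPicks n ℬ w
      = LW ++ (greedyAux ℬ LZ (∅ ∪ LW.toFinset)
        ++ ([] ++ greedyAux ℬ (LR ++ T)
            ((((∅ ∪ LW.toFinset) ∪ (greedyAux ℬ LZ (∅ ∪ LW.toFinset)).toFinset))
              ∪ ([] : List ℤ).toFinset))) := by
    rw [greedyPicks, horder, hH, hLU,
      show ((LW ++ LZ ++ LY) ++ LR) ++ T = LW ++ (LZ ++ (LY ++ (LR ++ T))) from by
        simp [List.append_assoc],
      greedyAux_append ℬ LW (LZ ++ (LY ++ (LR ++ T))) ∅, hstep1,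
      greedyAux_append ℬ LZ (LY ++ (LR ++ T)) _,
      greedyAux_append ℬ LY (LR ++ T) _, hstep3]
  -- the greedy solution meets U only inside W ∪ -Z
  have hGU : (greedySol n ℬ w) ∩ U ⊆ W ∪ negSet Z := by
    intro x hx
    rw [Finset.mem_inter] at hx
    obtain ⟨hxG, hxU⟩ := hx
    rw [greedySol, hpicks, List.mem_toFinset, List.nil_append, List.mem_append,
      List.mem_append] at hxG
    rcases hxG with hxG | hxG | hxG
    · exact Finset.mem_union_left _ (by rwa [hLW, Finset.mem_sort] at hxG)
    · have h2 := greedyAux_mem ℬ LZ _ x hxG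
      exact Finset.mem_union_right _ (by rwa [hLZ, Finset.mem_sort] at h2)
    · exfalso
      have hx4 := greedyAux_mem ℬ (LR ++ T) _ x hxG
      rw [List.mem_append] at hx4
      rcases hx4 with h | h
      · exact Finset.disjoint_left.mp hRU hxU (by rwa [hLR, Finset.mem_sort] at h)
      · have hnx := hTmem x h
        rcases (hHmemiff _).mp hnx with h2 | h2
        · exact hUadm x hxU h2
        · have h3 := hRposR h2
          rw [hR, Finset.mem_sdiff, Finset.mem_union] at h3
          exact h3.2 (Or.inr (mem_negSet.mpr (by simpa using hxU)))
  -- the contradiction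
  have hJBU : J ⊆ BJ ∩ U := fun j hj => Finset.mem_inter.mpr ⟨hJBJ hj, hJU hj⟩
  have h1 : (J.card : ℝ) ≤ ((BJ ∩ U).card : ℝ) :=
    Nat.cast_le.mpr (Finset.card_le_card hJBU)
  have h2 := hgreedy w hwadm ω hcompat BJ hBJ
  rw [hsum BJ, hsum (greedySol n ℬ w)] at h2
  have h3 : ((greedySol n ℬ w ∩ U).card : ℝ) ≤ ((W ∪ negSet Z).card : ℝ) :=
    Nat.cast_le.mpr (Finset.card_le_card hGU)
  have h4 : (W ∪ negSet Z).card = W.card + Z.card := by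
    rw [Finset.card_union_of_disjoint hWnZ, card_negSet]
  have h5 : J.card ≤ (W ∪ negSet Z).card := by exact_mod_cast h1.trans (h2.trans h3)
  omega
end

section
/- Let ℬ be a nonempty collection of subsets of E_{±n} and let ≺ be an admissible total ordering of E_{±n}. Then the greedy solution of ℬ with respect to ≺ is itself a member of ℬ, provided ℬ is an antichain with respect to inclusion (in particular, whenever the members of ℬ are equinumerous). -/
/-- If `ℬ` is a nonempty collection of subsets of `E_{±n}` that is an antichain
with respect to inclusion (in particular, if the members of `ℬ` are
equinumerous), then for any admissible total ordering of `E_{±n}` the greedy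
solution of `ℬ` is itself a member of `ℬ`. -/
theorem greedy_solution_mem (n : ℕ) (hn : 0 < n)
    (ℬ : Finset (Finset ℤ)) (hne : ℬ.Nonempty)
    (hsubE : ∀ B ∈ ℬ, B ⊆ SympE n)
    (hanti : ∀ B ∈ ℬ, ∀ B' ∈ ℬ, B ⊆ B' → B = B')
    (w : Equiv.Perm ℤ) (hw : IsAdmissiblePerm n w) :
    greedySol n ℬ w ∈ ℬ := by
  have key : ∀ (L : List ℤ) (B₀ : Finset ℤ), (∃ B' ∈ ℬ, B₀ ⊆ B') →
      (∃ B' ∈ ℬ, B₀ ∪ (greedyAux ℬ L B₀).toFinset ⊆ B') ∧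
      (∀ a ∈ L, ∀ B' ∈ ℬ, B₀ ∪ (greedyAux ℬ L B₀).toFinset ⊆ B' → a ∈ B' →
        a ∈ B₀ ∪ (greedyAux ℬ L B₀).toFinset) := by
    intro L
    induction L with
    | nil =>
      intro B₀ h
      simp only [greedyAux, List.toFinset_nil, Finset.union_empty]
      exact ⟨h, by simp⟩
    | cons a l ih =>
      intro B₀ h
      by_cases hc : ∃ B' ∈ ℬ, insert a B₀ ⊆ B'
      · have heq : greedyAux ℬ (a :: l) B₀ = a :: greedyAux ℬ l (insert a B₀) := by
          rw [greedyAux, if_pos hc]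
        have hset : B₀ ∪ (greedyAux ℬ (a :: l) B₀).toFinset
            = insert a B₀ ∪ (greedyAux ℬ l (insert a B₀)).toFinset := by
          rw [heq, List.toFinset_cons]
          ext x; simp only [Finset.mem_union, Finset.mem_insert]; tauto
        obtain ⟨h1, h2⟩ := ih (insert a B₀) hc
        rw [hset]
        refine ⟨h1, ?_⟩
        intro b hb B' hB' hsub hbB'
        rcases List.mem_cons.mp hb with rfl | hb
        · exact Finset.mem_union_left _ (Finset.mem_insert_self _ _)
        · exact h2 b hb B' hB' hsub hbB'
      · have heq : greedyAux ℬ (a :: l) B₀ = greedyAux ℬ l B₀ := by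
          rw [greedyAux, if_neg hc]
        rw [heq]
        obtain ⟨h1, h2⟩ := ih B₀ h
        refine ⟨h1, ?_⟩
        intro b hb B' hB' hsub hbB'
        rcases List.mem_cons.mp hb with rfl | hb
        · exfalso
          exact hc ⟨B', hB', Finset.insert_subset hbB'
            (le_trans Finset.subset_union_left hsub)⟩
        · exact h2 b hb B' hB' hsub hbB'
  obtain ⟨B₁, hB₁⟩ := hne
  obtain ⟨⟨B', hB', hsub⟩, hmax⟩ := key (orderList n w) ∅ ⟨B₁, hB₁, Finset.empty_subset _⟩
  have hmemL : ∀ x ∈ SympE n, x ∈ orderList n w := by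
    intro x hx
    have hwx : w x ∈ SympE n := hw.1 x hx
    simp only [orderList, List.mem_map, List.mem_reverse, Finset.mem_sort]
    exact ⟨w x, hwx, w.symm_apply_apply x⟩
  have hgs : greedySol n ℬ w = ∅ ∪ (greedyAux ℬ (orderList n w) ∅).toFinset := by
    simp [greedySol, greedyPicks]
  have hrev : B' ⊆ ∅ ∪ (greedyAux ℬ (orderList n w) ∅).toFinset := by
    intro a haB'
    exact hmax a (hmemL a (hsubE B' hB' haB')) B' hB' hsub haB'
  rw [hgs, Finset.Subset.antisymm hsub hrev]
  exact hB'
end
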